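/- arXiv:2303.14532 — 8 statements merged into one kernel-verified Lean document; each statement's English description precedes it below -/
import Mathlib

section
/- Let p_1 = 3, p_2 = 5, p_3 = 7, p_4 = 11, … be the increasing enumeration of the odd prime numbers. For all natural numbers m ≥ 1 and k ≥ 1, Π_{n=1}^{m} p_n^{2k}/(p_n^{2k} − 1) > Σ_{n=0}^{m} 1/(2n+1)^{2k}. -/
open Finset

/-- The `n`-th odd prime (0-indexed): `oddPrime 0 = 3`, `oddPrime 1 = 5`, etc. -/
noncomputable def oddPrime (n : ℕ) : ℕ := Nat.nth (fun p => p.Prime ∧ p ≠ 2) n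

lemma oddPred_infinite : {p : ℕ | p.Prime ∧ p ≠ 2}.Infinite := by
  have h : {p : ℕ | p.Prime ∧ p ≠ 2} = {p : ℕ | p.Prime} \ {2} := by
    ext p; simp [Set.mem_diff, and_comm]
  rw [h]
  exact Nat.infinite_setOf_prime.diff (Set.finite_singleton 2)

lemma oddPrime_spec (n : ℕ) : (oddPrime n).Prime ∧ oddPrime n ≠ 2 :=
  Nat.nth_mem_of_infinite oddPred_infinite n

lemma three_le_oddPrime (n : ℕ) : 3 ≤ oddPrime n := by
  have h := oddPrime_spec n
  have := h.1.two_le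
  omega

lemma oddPrime_injective : Function.Injective oddPrime := by
  have hsm : StrictMono oddPrime := fun a b hab =>
    (Nat.nth_lt_nth oddPred_infinite).mpr hab
  exact hsm.injective

lemma exists_oddPrime_eq {m p : ℕ} (hp : p.Prime) (hp2 : p ≠ 2) (hle : p ≤ 2 * m + 1) :
    ∃ i < m, oddPrime i = p := by
  refine ⟨Nat.count (fun q => q.Prime ∧ q ≠ 2) p, ?_, Nat.nth_count ⟨hp, hp2⟩⟩
  have hp3 : 3 ≤ p := by have := hp.two_le; omega
  have hpodd : p % 2 = 1 := by
    rcases hp.odd_of_ne_two hp2 with ⟨x, hx⟩; omega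
  have hm1 : 1 ≤ m := by omega
  rw [Nat.count_eq_card_filter_range]
  have hcard : #{x ∈ range p | x.Prime ∧ x ≠ 2} ≤ #(Finset.Icc 1 (m - 1)) := by
    apply Finset.card_le_card_of_injOn (fun j => j / 2)
    · intro j hj
      simp only [coe_filter, Set.mem_setOf_eq, mem_filter, mem_range] at hj
      obtain ⟨hjlt, hjp, hj2⟩ := hj
      have hj3 : 3 ≤ j := by have := hjp.two_le; omega
      have hjodd : j % 2 = 1 := by
        rcases hjp.odd_of_ne_two hj2 with ⟨x, hx⟩; omega
      simp only [Finset.mem_coe, Finset.mem_Icc]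
      omega
    · intro a ha b hb hab
      simp only [coe_filter, Set.mem_setOf_eq, mem_range] at ha hb
      have haodd : a % 2 = 1 := by
        rcases ha.2.1.odd_of_ne_two ha.2.2 with ⟨x, hx⟩; omega
      have hbodd : b % 2 = 1 := by
        rcases hb.2.1.odd_of_ne_two hb.2.2 with ⟨x, hx⟩; omega
      simp only at hab
      omega
  have : #(Finset.Icc 1 (m - 1)) = m - 1 := by
    rw [Nat.card_Icc]; omega
  omega

lemma factor_eq {m N : ℕ} (hN : N ≠ 0) (hodd : N % 2 = 1) (hle : N ≤ 2 * m + 1) :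
    N = ∏ i ∈ range m, oddPrime i ^ (N.factorization (oddPrime i)) := by
  conv_lhs => rw [← Nat.factorization_prod_pow_eq_self hN]
  rw [Finsupp.prod]
  have himg : ∏ p ∈ (range m).image oddPrime, p ^ (N.factorization p)
      = ∏ i ∈ range m, oddPrime i ^ (N.factorization (oddPrime i)) :=
    Finset.prod_image (fun a _ b _ h => oddPrime_injective h)
  rw [← himg]
  apply Finset.prod_subset
  · intro p hp
    rw [Nat.support_factorization] at hp
    have hpp : p.Prime := Nat.prime_of_mem_primeFactors hp
    have hpd : p ∣ N := Nat.dvd_of_mem_primeFactors hp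
    have hp2 : p ≠ 2 := by
      rintro rfl
      rcases hpd with ⟨c, rfl⟩
      omega
    have hplen : p ≤ N := Nat.le_of_dvd (Nat.pos_of_ne_zero hN) hpd
    obtain ⟨i, him, hieq⟩ := exists_oddPrime_eq hpp hp2 (le_trans hplen hle)
    exact Finset.mem_image.mpr ⟨i, Finset.mem_range.mpr him, hieq⟩
  · intro p _ hp
    simp [Finsupp.notMem_support_iff.mp hp]

lemma inv_pow_pow (p : ℝ) (s e : ℕ) : ((p ^ s)⁻¹) ^ e = ((p ^ e) ^ s)⁻¹ := by
  rw [inv_pow, ← pow_mul, mul_comm, pow_mul]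

theorem odd_prime_product_gt_odd_sum (m k : ℕ) (hm : 1 ≤ m) (hk : 1 ≤ k) :
    ∏ n ∈ Finset.range m,
        ((oddPrime n : ℝ) ^ (2 * k) / ((oddPrime n : ℝ) ^ (2 * k) - 1))
    > ∑ n ∈ Finset.range (m + 1), (1 : ℝ) / ((2 * n + 1 : ℕ) : ℝ) ^ (2 * k) := by
  classical
  set s : ℕ := 2 * k with hs
  have hx1 : ∀ i : ℕ, (1 : ℝ) < (oddPrime i : ℝ) ^ s := by
    intro i
    have h3 : (3 : ℝ) ≤ (oddPrime i : ℝ) := by exact_mod_cast three_le_oddPrime i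
    exact one_lt_pow₀ (by linarith) (by omega)
  -- geometric bound, each factor
  have hgeom : ∀ i : ℕ, ∑ e ∈ range (2 * m + 2), (((oddPrime i : ℝ) ^ s)⁻¹) ^ e
      < (oddPrime i : ℝ) ^ s / ((oddPrime i : ℝ) ^ s - 1) := by
    intro i
    set a : ℝ := (oddPrime i : ℝ) ^ s with ha
    have ha1 : 1 < a := hx1 i
    have ha0 : 0 < a := by linarith
    have hr0 : 0 < a⁻¹ := inv_pos.mpr ha0
    have hr1 : a⁻¹ < 1 := by
      rw [inv_lt_one_iff₀]; right; exact ha1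
    have hne : a⁻¹ ≠ 1 := ne_of_lt hr1
    rw [geom_sum_eq hne]
    have hpow0 : 0 < (a⁻¹) ^ (2 * m + 2) := pow_pos hr0 _
    have h1 : ((a⁻¹) ^ (2 * m + 2) - 1) / (a⁻¹ - 1)
        = (1 - (a⁻¹) ^ (2 * m + 2)) / (1 - a⁻¹) := by
      rw [div_eq_div_iff (by linarith) (by linarith)]
      ring
    have h2 : a / (a - 1) = 1 / (1 - a⁻¹) := by
      field_simp
    rw [h1, h2]
    exact (div_lt_div_iff_of_pos_right (by linarith)).mpr (by linarith)
  have key1 : ∑ n ∈ range (m + 1), (1 : ℝ) / ((2 * n + 1 : ℕ) : ℝ) ^ s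
      ≤ ∏ i ∈ range m, ∑ e ∈ range (2 * m + 2), (((oddPrime i : ℝ) ^ s)⁻¹) ^ e := by
    rw [Finset.prod_sum]
    set G : ℕ → (∀ i ∈ range m, ℕ) :=
      fun n i _ => (2 * n + 1).factorization (oddPrime i) with hG
    have hfac : ∀ n, n < m + 1 → (2 * n + 1)
        = ∏ i ∈ range m, oddPrime i ^ ((2 * n + 1).factorization (oddPrime i)) := by
      intro n hn
      exact factor_eq (by omega) (by omega) (by omega)
    have hterm : ∀ n ∈ range (m + 1),
        (∏ x ∈ (range m).attach, (((oddPrime x.1 : ℝ) ^ s)⁻¹) ^ (G n x.1 x.2))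
        = (1 : ℝ) / ((2 * n + 1 : ℕ) : ℝ) ^ s := by
      intro n hn
      rw [mem_range] at hn
      have hatt : (∏ x ∈ (range m).attach, (((oddPrime x.1 : ℝ) ^ s)⁻¹) ^ (G n x.1 x.2))
          = ∏ i ∈ range m,
              (((oddPrime i : ℝ) ^ s)⁻¹) ^ ((2 * n + 1).factorization (oddPrime i)) :=
        Finset.prod_attach (range m)
          (fun i => (((oddPrime i : ℝ) ^ s)⁻¹) ^ ((2 * n + 1).factorization (oddPrime i)))
      rw [hatt]
      simp only [inv_pow_pow]
      rw [Finset.prod_inv_distrib, Finset.prod_pow]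
      have hc : ((2 * n + 1 : ℕ) : ℝ)
          = ∏ i ∈ range m, ((oddPrime i : ℝ)) ^ ((2 * n + 1).factorization (oddPrime i)) := by
        conv_lhs => rw [hfac n hn]
        push_cast
        rfl
      rw [one_div, hc]
    have hGinj : ∀ x ∈ range (m + 1), ∀ y ∈ range (m + 1), G x = G y → x = y := by
      intro x hx y hy hxy
      rw [mem_range] at hx hy
      have hpt : ∀ i, i ∈ range m →
          (2 * x + 1).factorization (oddPrime i) = (2 * y + 1).factorization (oddPrime i) :=
        fun i hi => congrFun (congrFun hxy i) hi
      have hxy2 : 2 * x + 1 = 2 * y + 1 := by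
        rw [hfac x hx, hfac y hy]
        exact Finset.prod_congr rfl (fun i hi => by rw [hpt i hi])
      omega
    have heq : ∑ n ∈ range (m + 1), (1 : ℝ) / ((2 * n + 1 : ℕ) : ℝ) ^ s
        = ∑ g ∈ (range (m + 1)).image G,
            ∏ x ∈ (range m).attach, (((oddPrime x.1 : ℝ) ^ s)⁻¹) ^ (g x.1 x.2) := by
      rw [Finset.sum_image hGinj]
      exact (Finset.sum_congr rfl hterm).symm
    rw [heq]
    apply Finset.sum_le_sum_of_subset_of_nonneg
    · intro g hg
      rw [Finset.mem_image] at hg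
      obtain ⟨n, hn, rfl⟩ := hg
      rw [mem_range] at hn
      rw [Finset.mem_pi]
      intro i hi
      rw [mem_range]
      have h0 : (2 * n + 1) ≠ 0 := by omega
      have hlt := Nat.factorization_lt (oddPrime i) h0
      show (2 * n + 1).factorization (oddPrime i) < 2 * m + 2
      omega
    · intro g _ _
      apply Finset.prod_nonneg
      intro x _
      positivity
  have key2 : ∏ i ∈ range m, ∑ e ∈ range (2 * m + 2), (((oddPrime i : ℝ) ^ s)⁻¹) ^ e
      < ∏ i ∈ range m, ((oddPrime i : ℝ) ^ s / ((oddPrime i : ℝ) ^ s - 1)) := by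
    apply Finset.prod_lt_prod_of_nonempty
    · intro i _
      apply Finset.sum_pos
      · intro e _
        have h3 : (0 : ℝ) < (oddPrime i : ℝ) := by
          have := three_le_oddPrime i
          exact_mod_cast Nat.lt_of_lt_of_le (by norm_num) this
        positivity
      · exact ⟨0, mem_range.mpr (by omega)⟩
    · intro i _
      exact hgeom i
    · exact ⟨0, mem_range.mpr (by omega)⟩
  exact lt_of_le_of_lt key1 key2
end

section
/- For every real number a ≥ 3 and every natural number k ≥ 1, the strict inequality (2·(2k)!/(π^{2k}(2^{2k} − 1))) · a^{2k}/(a^{2k} − 1) < |B_{2k}| holds. -/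
open Real

lemma aux_25_81 (k : ℕ) (hk : 1 ≤ k) : (25:ℝ) ^ k * 9 ≤ 81 ^ k * 3 := by
  induction k, hk using Nat.le_induction with
  | base => norm_num
  | succ n hn ih =>
    have h1 : (25:ℝ) ^ (n+1) * 9 = 25 * ((25:ℝ) ^ n * 9) := by ring
    have h2 : (81:ℝ) ^ (n+1) * 3 = 81 * ((81:ℝ) ^ n * 3) := by ring
    have hp : (0:ℝ) < 81 ^ n * 3 := by positivity
    rw [h1, h2]
    nlinarith

theorem bernoulli_lower_bound_of_three_le (a : ℝ) (ha : 3 ≤ a) (k : ℕ) (hk : 1 ≤ k) :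
    (2 * (Nat.factorial (2 * k) : ℝ) / (Real.pi ^ (2 * k) * ((2 : ℝ) ^ (2 * k) - 1))) *
      (a ^ (2 * k) / (a ^ (2 * k) - 1))
    < |(bernoulli (2 * k) : ℝ)| := by
  have hk0 : k ≠ 0 := by omega
  set f : ℕ → ℝ := fun n => 1 / (n : ℝ) ^ (2 * k) with hf
  set S : ℝ := (-1 : ℝ) ^ (k + 1) * (2 : ℝ) ^ (2 * k - 1) * π ^ (2 * k) *
      bernoulli (2 * k) / (Nat.factorial (2 * k)) with hSdef
  have hS : HasSum f S := hasSum_zeta_nat hk0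
  have h2pos : (0:ℝ) < 2 ^ (2*k) := by positivity
  -- even part
  have heq : (fun n => f (2 * n)) = fun n => ((2 : ℝ) ^ (2 * k))⁻¹ * f n := by
    funext n
    simp only [hf]
    push_cast
    rw [mul_pow, one_div, one_div, mul_inv]
  have hEven : HasSum (fun n => f (2 * n)) (((2 : ℝ) ^ (2 * k))⁻¹ * S) := by
    rw [heq]; exact hS.mul_left _
  have hOddS : Summable (fun n => f (2 * n + 1)) :=
    hS.summable.comp_injective (fun m n h => by omega)
  set T : ℝ := ∑' n, f (2 * n + 1) with hTdef
  have hOdd : HasSum (fun n => f (2 * n + 1)) T := hOddS.hasSum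
  have hsplit : S = ((2 : ℝ) ^ (2 * k))⁻¹ * S + T := hS.unique (hEven.even_add_odd hOdd)
  -- lower bound on T
  have hfnonneg : ∀ n, 0 ≤ f (2 * n + 1) := fun n => by positivity
  have hTlb : 1 + 1 / (9 : ℝ) ^ k + 1 / (25 : ℝ) ^ k ≤ T := by
    have h3 : ∑ n ∈ Finset.range 3, f (2 * n + 1) ≤ T :=
      hOddS.sum_le_tsum _ (fun i _ => hfnonneg i)
    have e1 : f 1 = 1 := by simp [hf]
    have e3 : f 3 = 1 / (9 : ℝ) ^ k := by
      simp only [hf]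
      norm_num [pow_mul]
    have e5 : f 5 = 1 / (25 : ℝ) ^ k := by
      simp only [hf]
      norm_num [pow_mul]
    rw [Finset.sum_range_succ, Finset.sum_range_succ, Finset.sum_range_one] at h3
    norm_num [e1, e3, e5, one_div] at h3 ⊢
    convert h3 using 2 <;> norm_num
  have h9 : (9 : ℝ) ≤ (9 : ℝ) ^ k := by
    calc (9:ℝ) = 9 ^ 1 := by norm_num
    _ ≤ 9 ^ k := pow_le_pow_right₀ (by norm_num) hk
  have h9pos : (0:ℝ) < 9 ^ k := by positivity
  have h25pos : (0:ℝ) < 25 ^ k := by positivity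
  -- 25^k < 9^k * (9^k - 1)
  have h25 : (25 : ℝ) ^ k < 9 ^ k * ((9:ℝ) ^ k - 1) := by
    have h81 : (9:ℝ) ^ k * (9:ℝ) ^ k = 81 ^ k := by
      rw [← mul_pow]; norm_num
    have hle := aux_25_81 k hk
    nlinarith
  -- 1/(9^k - 1) < 1/9^k + 1/25^k
  have harith : 1 / ((9:ℝ) ^ k - 1) < 1 / (9:ℝ) ^ k + 1 / (25:ℝ) ^ k := by
    rw [div_add_div _ _ (ne_of_gt h9pos) (ne_of_gt h25pos),
      div_lt_div_iff₀ (by linarith) (by positivity)]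
    nlinarith
  -- a^(2k) ≥ 9^k
  set A : ℝ := a ^ (2 * k) with hA
  have hA9 : (9:ℝ) ^ k ≤ A := by
    rw [hA, pow_mul]
    exact pow_le_pow_left₀ (by norm_num) (by nlinarith) k
  have hA1 : (1:ℝ) < A := by linarith
  have hdiv : 1 / (A - 1) ≤ 1 / ((9:ℝ) ^ k - 1) :=
    one_div_le_one_div_of_le (by linarith) (by linarith)
  -- key : A/(A-1) < T
  have key : A / (A - 1) < T := by
    have hne : A - 1 ≠ 0 := by linarith
    have hAe : A / (A - 1) = 1 + 1 / (A - 1) := by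
      field_simp
      ring
    rw [hAe]; linarith
  -- T in terms of S
  have hSpos : 0 < S := by
    have hu0 : (0:ℝ) < ((2:ℝ) ^ (2*k))⁻¹ := by positivity
    have hu1 : ((2:ℝ) ^ (2*k))⁻¹ < 1 := by
      rw [inv_lt_one_iff₀]; right
      calc (1:ℝ) < 2 ^ 1 := by norm_num
      _ ≤ 2 ^ (2*k) := pow_le_pow_right₀ (by norm_num) (by omega)
    have hT1 : (1:ℝ) < T := by
      have i1 : (0:ℝ) < 1/(9:ℝ)^k := by positivity
      have i2 : (0:ℝ) < 1/(25:ℝ)^k := by positivity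
      linarith
    nlinarith [hsplit]
  have hTS : S * ((2:ℝ) ^ (2*k) - 1) / 2 ^ (2*k) = T := by
    rw [div_eq_iff (ne_of_gt h2pos)]
    have h1 : ((2:ℝ) ^ (2*k))⁻¹ * 2 ^ (2*k) = 1 := inv_mul_cancel₀ (ne_of_gt h2pos)
    nlinarith [hsplit]
  clear_value f S T A
  -- express |bernoulli|
  have hD : (0:ℝ) < (2:ℝ) ^ (2*k) - 1 := by
    have : (2:ℝ) ^ 1 ≤ 2 ^ (2*k) := pow_le_pow_right₀ (by norm_num) (by omega)
    norm_num at this; linarith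
  have hPpos : (0:ℝ) < π ^ (2*k) := by positivity
  have hFpos : (0:ℝ) < (Nat.factorial (2*k) : ℝ) := by positivity
  have h2e : (2:ℝ) ^ (2*k) = 2 ^ (2*k-1) * 2 := by
    rw [← pow_succ]; congr 1; omega
  have h2k1pos : (0:ℝ) < (2:ℝ) ^ (2*k-1) := by positivity
  have hb : |(bernoulli (2 * k) : ℝ)| =
      S * (Nat.factorial (2*k) : ℝ) / (2 ^ (2*k-1) * π ^ (2*k)) := by
    have h1 : (-1:ℝ) ^ (k+1) * (bernoulli (2 * k) : ℝ) =
        S * (Nat.factorial (2*k) : ℝ) / (2 ^ (2*k-1) * π ^ (2*k)) := by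
      rw [hSdef]
      field_simp
    have h2 : |(bernoulli (2 * k) : ℝ)| = |(-1:ℝ) ^ (k+1) * (bernoulli (2 * k) : ℝ)| := by
      rw [abs_mul, abs_pow, abs_neg, abs_one, one_pow, one_mul]
    rw [h2, h1,
      abs_of_pos (div_pos (mul_pos hSpos hFpos) (mul_pos h2k1pos hPpos))]
  rw [hb]
  have hcpos : 0 < 2 * (Nat.factorial (2*k):ℝ) / (π ^ (2*k) * ((2:ℝ) ^ (2*k) - 1)) :=
    div_pos (by positivity) (mul_pos hPpos hD)
  calc (2 * (Nat.factorial (2 * k) : ℝ) / (π ^ (2 * k) * ((2 : ℝ) ^ (2 * k) - 1))) *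
      (A / (A - 1))
      < (2 * (Nat.factorial (2 * k) : ℝ) / (π ^ (2 * k) * ((2 : ℝ) ^ (2 * k) - 1))) *
      (S * ((2:ℝ) ^ (2*k) - 1) / 2 ^ (2*k)) :=
        mul_lt_mul_of_pos_left (hTS ▸ key) hcpos
    _ = S * (Nat.factorial (2*k) : ℝ) / (2 ^ (2*k-1) * π ^ (2*k)) := by
        set D : ℝ := (2:ℝ) ^ (2*k) - 1 with hDdef
        rw [h2e]
        have hDne : D ≠ 0 := ne_of_gt hD
        have hPne : π ^ (2*k) ≠ 0 := ne_of_gt hPpos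
        have h2ne : (2:ℝ) ^ (2*k-1) ≠ 0 := ne_of_gt h2k1pos
        field_simp
end

section
/- For every natural number k ≥ 1, the strict inequality (2·(2k)!/(π^{2k}(2^{2k} − 1))) · 3^{2k}/(3^{2k} − 1) < |B_{2k}| holds. -/
open Real Function

lemma aux_sieve_key (s : ℕ) (hs : 1 ≤ s) (S : ℝ)
    (hS : HasSum (fun n : ℕ => 1 / (n : ℝ) ^ s) S) :
    1 < S * (1 - (1/2 : ℝ) ^ s) * (1 - (1/3 : ℝ) ^ s) := by
  set f : ℕ → ℝ := fun n => 1 / (n : ℝ) ^ s with hf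
  have hs0 : s ≠ 0 := by omega
  have hmul : ∀ (c n : ℕ), f (c * n) = (1/(c:ℝ)) ^ s * f n := by
    intro c n
    simp only [hf, Nat.cast_mul, mul_pow, div_pow, one_pow, one_div, mul_inv]
    rw [inv_pow]
  -- multiples of 2
  set F2 : ℕ → ℝ := fun n => if 2 ∣ n then f n else 0 with hF2
  have inj2 : Injective (fun n : ℕ => 2 * n) := fun a b h => by simpa using h
  have h2 : HasSum F2 ((1/2:ℝ)^s * S) := by
    rw [← inj2.hasSum_iff]
    · have : (F2 ∘ fun n : ℕ => 2 * n) = fun n => (1/2:ℝ)^s * f n := by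
        funext n
        simp only [hF2, comp_apply, Dvd.intro n rfl, if_true]
        exact hmul 2 n
      rw [this]
      exact hS.mul_left _
    · intro x hx
      have hnd : ¬ 2 ∣ x := fun ⟨d, hd⟩ => hx ⟨d, hd.symm⟩
      simp [hF2, hnd]
  set g : ℕ → ℝ := fun n => if 2 ∣ n then 0 else f n with hg
  have hOdd : HasSum g (S * (1 - (1/2:ℝ)^s)) := by
    have := hS.sub h2
    have heq : (fun n => f n - F2 n) = g := by
      funext n; simp only [hg, hF2]; split <;> simp
    rw [heq] at this
    rw [show S * (1 - (1/2:ℝ)^s) = S - (1/2:ℝ)^s * S by ring]; exact this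
  -- multiples of 3
  set F3 : ℕ → ℝ := fun n => if 3 ∣ n then g n else 0 with hF3
  have inj3 : Injective (fun n : ℕ => 3 * n) := fun a b h => by simpa using h
  have h3 : HasSum F3 ((1/3:ℝ)^s * (S * (1 - (1/2:ℝ)^s))) := by
    rw [← inj3.hasSum_iff]
    · have : (F3 ∘ fun n : ℕ => 3 * n) = fun n => (1/3:ℝ)^s * g n := by
        funext n
        simp only [hF3, comp_apply, Dvd.intro n rfl, if_true, hg]
        have h23 : 2 ∣ 3 * n ↔ 2 ∣ n := by constructor <;> intro h <;> omega
        rw [if_congr h23 rfl rfl]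
        split
        · ring
        · exact hmul 3 n
      rw [this]
      exact hOdd.mul_left _
    · intro x hx
      have hnd : ¬ 3 ∣ x := fun ⟨d, hd⟩ => hx ⟨d, hd.symm⟩
      simp [hF3, hnd]
  set G : ℕ → ℝ := fun n => if 3 ∣ n then 0 else g n with hG
  have hGsum : HasSum G (S * (1 - (1/2:ℝ)^s) * (1 - (1/3:ℝ)^s)) := by
    have := hOdd.sub h3
    have heq : (fun n => g n - F3 n) = G := by
      funext n; simp only [hG, hF3]; split <;> simp
    rw [heq] at this
    rw [show S * (1 - (1/2:ℝ)^s) * (1 - (1/3:ℝ)^s) = S * (1 - (1/2:ℝ)^s) - (1/3:ℝ)^s * (S * (1 - (1/2:ℝ)^s)) by ring]; exact this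
  have hGnn : ∀ n, 0 ≤ G n := by
    intro n
    simp only [hG, hg, hf]
    split
    · exact le_refl 0
    · split
      · exact le_refl 0
      · positivity
  have hsum : ∑ n ∈ ({1, 5} : Finset ℕ), G n ≤
      S * (1 - (1/2:ℝ)^s) * (1 - (1/3:ℝ)^s) :=
    sum_le_hasSum _ (fun n _ => hGnn n) hGsum
  have hG1 : G 1 = 1 := by norm_num [hG, hg, hf]
  have hG5 : G 5 = 1 / (5:ℝ)^s := by norm_num [hG, hg, hf]
  rw [Finset.sum_insert (by norm_num), Finset.sum_singleton, hG1, hG5] at hsum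
  have h5 : (0:ℝ) < 1 / (5:ℝ)^s := by positivity
  linarith

theorem bernoulli_lower_bound_three (k : ℕ) (hk : 1 ≤ k) :
    (2 * (Nat.factorial (2 * k) : ℝ) / (Real.pi ^ (2 * k) * ((2 : ℝ) ^ (2 * k) - 1))) *
      ((3 : ℝ) ^ (2 * k) / ((3 : ℝ) ^ (2 * k) - 1))
    < |(bernoulli (2 * k) : ℝ)| := by
  have hk0 : k ≠ 0 := by omega
  have hS := hasSum_zeta_nat hk0
  set S : ℝ := (-1 : ℝ) ^ (k + 1) * (2 : ℝ) ^ (2 * k - 1) * π ^ (2 * k) *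
      bernoulli (2 * k) / (2 * k).factorial with hSdef
  have key := aux_sieve_key (2 * k) (by omega) S hS
  have hS1 : (1:ℝ) ≤ S := by
    have := sum_le_hasSum ({1} : Finset ℕ) (fun n _ => by positivity) hS
    simpa using this
  have hπ : (0:ℝ) < π := Real.pi_pos
  have hπp : (0:ℝ) < π ^ (2 * k) := by positivity
  have hfac : (0:ℝ) < ((2 * k).factorial : ℝ) := by positivity
  have h2p : (2:ℝ)^(2*k-1) * 2 = 2^(2*k) := by
    rw [← pow_succ]; congr 1; omega
  have hA : (1:ℝ) < (2:ℝ)^(2*k) := one_lt_pow₀ (by norm_num) (by omega)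
  have hB : (1:ℝ) < (3:ℝ)^(2*k) := one_lt_pow₀ (by norm_num) (by omega)
  have h1 : S * ((2*k).factorial : ℝ) * 2 / ((2:ℝ)^(2*k) * π^(2*k)) =
      (-1:ℝ)^(k+1) * (bernoulli (2*k) : ℝ) := by
    rw [hSdef, ← h2p]
    have hc : ((-1:ℝ))^(k+1) = 1 ∨ ((-1:ℝ))^(k+1) = -1 := neg_one_pow_eq_or ℝ (k+1)
    rcases hc with hc | hc <;> rw [hc] <;> field_simp <;> ring
  have habs : |(bernoulli (2*k) : ℝ)| = S * ((2*k).factorial : ℝ) * 2 / ((2:ℝ)^(2*k) * π^(2*k)) := by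
    have hpos : 0 < S * ((2*k).factorial : ℝ) * 2 / ((2:ℝ)^(2*k) * π^(2*k)) := by positivity
    rw [h1] at hpos ⊢
    nth_rewrite 1 [show |(bernoulli (2*k) : ℝ)| = |(-1:ℝ)^(k+1) * (bernoulli (2*k) : ℝ)| by
      rw [abs_mul, abs_pow, abs_neg, abs_one, one_pow, one_mul]]
    exact abs_of_pos hpos
  rw [habs]
  -- key algebraic step
  have hu : ((1:ℝ)/2)^(2*k) * 2^(2*k) = 1 := by rw [← mul_pow]; norm_num
  have hv : ((1:ℝ)/3)^(2*k) * 3^(2*k) = 1 := by rw [← mul_pow]; norm_num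
  have hkey2 : (2:ℝ)^(2*k) * 3^(2*k) < S * (((2:ℝ)^(2*k) - 1) * ((3:ℝ)^(2*k) - 1)) := by
    have h6 : (0:ℝ) < (2:ℝ)^(2*k) * 3^(2*k) := by positivity
    have := mul_lt_mul_of_pos_right key h6
    calc (2:ℝ)^(2*k) * 3^(2*k) = 1 * ((2:ℝ)^(2*k) * 3^(2*k)) := by ring
    _ < S * (1 - (1/2:ℝ)^(2*k)) * (1 - (1/3:ℝ)^(2*k)) * ((2:ℝ)^(2*k) * 3^(2*k)) := this
    _ = S * ((2^(2*k) - (1/2:ℝ)^(2*k) * 2^(2*k)) * (3^(2*k) - (1/3:ℝ)^(2*k) * 3^(2*k))) := by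
        ring
    _ = S * (((2:ℝ)^(2*k) - 1) * ((3:ℝ)^(2*k) - 1)) := by rw [hu, hv]
  rw [div_mul_div_comm, div_lt_div_iff₀ (by nlinarith) (by positivity)]
  nlinarith [mul_pos hfac hπp, hkey2, mul_lt_mul_of_pos_left hkey2 (mul_pos hfac hπp)]
end

section
/- The constant α = 1 is best possible in the lower bound for even-indexed Bernoulli numbers: if α is a real number such that (2·(2k)!/(π^{2k}(2^{2k} − 1))) · 3^{2k}/(3^{2k} − α) < |B_{2k}| for every natural number k ≥ 1, then α ≤ 1. -/
open Real

set_option maxHeartbeats 1600000 in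
theorem bernoulli_lower_bound_alpha_best (α : ℝ)
    (h : ∀ k : ℕ, 1 ≤ k →
      (2 * (Nat.factorial (2 * k) : ℝ) / (Real.pi ^ (2 * k) * ((2 : ℝ) ^ (2 * k) - 1))) *
        ((3 : ℝ) ^ (2 * k) / ((3 : ℝ) ^ (2 * k) - α))
      < |(bernoulli (2 * k) : ℝ)|) :
    α ≤ 1 := by
  by_contra hcon
  push_neg at hcon
  -- choose k
  obtain ⟨n1, hn1⟩ := exists_pow_lt_of_lt_one (x := (α - 1) / 48) (y := (9 : ℝ) / 16)
    (by linarith) (by norm_num)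
  obtain ⟨n2, hn2⟩ := pow_unbounded_of_one_lt (y := (9 : ℝ)) α (by norm_num)
  set k := max (max n1 n2) 1 with hkdef
  have hk1 : 1 ≤ k := le_max_right _ _
  have hchoice1 : (48 : ℝ) * ((9 : ℝ) / 16) ^ k < α - 1 := by
    have : ((9 : ℝ) / 16) ^ k ≤ ((9 : ℝ) / 16) ^ n1 :=
      pow_le_pow_of_le_one (by norm_num) (by norm_num)
        (le_trans (le_max_left _ _) (le_max_left _ _))
    have h48 : (48 : ℝ) * ((9:ℝ)/16) ^ n1 < α - 1 := by
      have := (lt_div_iff₀ (by norm_num : (0:ℝ) < 48)).mp hn1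
      linarith [ (lt_div_iff₀' (by norm_num : (0:ℝ) < 48)).mp hn1 ]
    nlinarith
  have hchoice2 : α < (9 : ℝ) ^ k := by
    have : (9 : ℝ) ^ n2 ≤ 9 ^ k :=
      pow_le_pow_right₀ (by norm_num)
        (le_trans (le_max_right n1 n2) (le_max_left _ _))
    linarith
  clear_value k
  obtain ⟨m, rfl⟩ : ∃ m, k = m + 1 := ⟨k - 1, (Nat.succ_pred_eq_of_pos hk1).symm⟩
  set k := m + 1 with hk
  clear_value k
  -- notation
  set x : ℝ := (2 : ℝ) ^ (2 * k) with hx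
  set y : ℝ := (3 : ℝ) ^ (2 * k) with hy
  set P : ℝ := π ^ (2 * k) with hP
  set F : ℝ := ((2 * k).factorial : ℝ) with hF
  set B : ℝ := (bernoulli (2 * k) : ℝ) with hB
  have hy9 : y = (9 : ℝ) ^ k := by rw [hy, pow_mul]; norm_num
  have hx2 : x ^ 2 = (16 : ℝ) ^ k := by
    rw [hx, ← pow_mul, show 2 * k * 2 = 4 * k from by ring, pow_mul]
    congr 1
    norm_num
  have hx4 : (4 : ℝ) ≤ x := by
    rw [hx]
    calc (4:ℝ) = 2 ^ 2 := by norm_num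
    _ ≤ 2 ^ (2 * k) := pow_le_pow_right₀ (by norm_num) (by omega)
  have hy1 : (1 : ℝ) < y := one_lt_pow₀ (by norm_num) (by omega)
  have hyα : α < y := by rw [hy9]; exact hchoice2
  have hxpos : (0 : ℝ) < x := by positivity
  have hPpos : (0 : ℝ) < P := by rw [hP]; positivity
  have hFpos : (0 : ℝ) < F := by rw [hF]; exact_mod_cast Nat.factorial_pos _
  have hypos : (0 : ℝ) < y := by positivity
  -- zeta sum
  have hS := hasSum_zeta_nat (k := k) (by omega)
  set S : ℝ := (-1 : ℝ) ^ (k + 1) * (2 : ℝ) ^ (2 * k - 1) * π ^ (2 * k) *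
    bernoulli (2 * k) / ((2 * k).factorial : ℝ) with hSdef
  clear_value x y P F B S
  have hS1 : (1 : ℝ) ≤ S := by
    have := le_hasSum hS 1 (fun i _ => by positivity)
    simpa using this
  have h2pow : (2 : ℝ) ^ (2 * k - 1) = x / 2 := by
    rw [hx, eq_div_iff (two_ne_zero' ℝ), ← pow_succ]
    congr 1
    omega
  have hx1ne : x - 1 ≠ 0 := ne_of_gt (by linarith)
  have hyane : y - α ≠ 0 := ne_of_gt (by linarith)
  have hxne : x ≠ 0 := ne_of_gt hxpos
  have hPne : P ≠ 0 := ne_of_gt hPpos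
  have hFne : F ≠ 0 := ne_of_gt hFpos
  have hyne : y ≠ 0 := ne_of_gt hypos
  -- |B| = 2 * S * F / (x * P)
  have hBabs : |B| = 2 * S * F / (x * P) := by
    have hSeq : S = x / 2 * P * ((-1 : ℝ) ^ (k + 1) * B) / F := by
      rw [hSdef, h2pow, hP, hF, hB]; ring
    have hBpos : 0 < (-1 : ℝ) ^ (k + 1) * B := by
      by_contra hb
      push_neg at hb
      have : S ≤ 0 := by
        rw [hSeq]
        apply div_nonpos_of_nonpos_of_nonneg _ hFpos.le
        have : 0 < x / 2 * P := by positivity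
        nlinarith
      linarith
    have habs : |B| = (-1 : ℝ) ^ (k + 1) * B := by
      rcases Nat.even_or_odd (k + 1) with he | ho
      · rw [he.neg_one_pow] at hBpos ⊢
        rw [one_mul] at hBpos ⊢
        exact abs_of_pos hBpos
      · rw [ho.neg_one_pow] at hBpos ⊢
        rw [abs_of_neg (by linarith)]
        ring
    rw [habs]
    field_simp at hSeq ⊢
    linarith [hSeq]
  -- the key inequality on S
  have hkey : x / (x - 1) * (y / (y - α)) < S := by
    have hh := h k hk1
    rw [← hP, ← hx, ← hy, ← hF, ← hB] at hh
    rw [hBabs] at hh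
    have hrw : 2 * F / (P * (x - 1)) * (y / (y - α))
        = 2 * F / (x * P) * (x / (x - 1) * (y / (y - α))) := by
      field_simp
    have hrw2 : 2 * S * F / (x * P) = 2 * F / (x * P) * S := by ring
    rw [hrw, hrw2] at hh
    exact (mul_lt_mul_iff_right₀ (by positivity)).mp hh
  -- lower bound for LHS
  have hlow : 1 + 1 / x + α / y ≤ x / (x - 1) * (y / (y - α)) := by
    have hA : 1 + 1 / x ≤ x / (x - 1) := by
      have : x / (x - 1) - (1 + 1 / x) = 1 / (x * (x - 1)) := by
        field_simp
        ring
      have hp : 0 < 1 / (x * (x - 1)) :=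
        one_div_pos.mpr (mul_pos hxpos (by linarith only [hx4]))
      linarith only [this, hp]
    have hBB : 1 + α / y ≤ y / (y - α) := by
      have : y / (y - α) - (1 + α / y) = α ^ 2 / (y * (y - α)) := by
        field_simp
        ring
      have hp : 0 ≤ α ^ 2 / (y * (y - α)) :=
        div_nonneg (sq_nonneg α) (le_of_lt (mul_pos hypos (by linarith only [hyα])))
      linarith only [this, hp]
    have hprod : (1 + 1 / x) * (1 + α / y) ≤ x / (x - 1) * (y / (y - α)) :=
      mul_le_mul hA hBB
        (by linarith only [div_nonneg (show (0:ℝ) ≤ α from by linarith only [hcon]) hypos.le])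
        (div_nonneg hxpos.le (by linarith only [hx4]))
    have h2 : 1 + 1 / x + α / y ≤ (1 + 1 / x) * (1 + α / y) := by
      have h1 : 0 ≤ 1 / x * (α / y) :=
        mul_nonneg (by positivity) (div_nonneg (by linarith only [hcon]) hypos.le)
      have h3 : (1 + 1 / x) * (1 + α / y) = 1 + 1 / x + α / y + 1 / x * (α / y) := by ring
      linarith only [h1, h3]
    linarith only [hprod, h2]
  -- upper bound for S
  have hup : S ≤ 1 + 1 / x + 1 / y + 48 / x ^ 2 := by
    have hsum := hS.summable
    have htail : Summable (fun i : ℕ => 1 / ((i + 4 : ℕ) : ℝ) ^ (2 * k)) :=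
      (summable_nat_add_iff 4).mpr hsum
    have hsplit := Summable.sum_add_tsum_nat_add (f := fun n : ℕ => 1 / (n : ℝ) ^ (2 * k)) 4 hsum
    rw [hS.tsum_eq] at hsplit
    have hfin : ∑ i ∈ Finset.range 4, 1 / (i : ℝ) ^ (2 * k) = 1 + 1 / x + 1 / y := by
      rw [Finset.sum_range_succ, Finset.sum_range_succ, Finset.sum_range_succ,
        Finset.sum_range_one]
      norm_num [zero_pow (show 2 * k ≠ 0 by omega)]
      rw [hx, hy]
    -- tail bound
    have htb : ∑' i : ℕ, 1 / ((i + 4 : ℕ) : ℝ) ^ (2 * k) ≤ 48 / x ^ 2 := by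
      have hterm : ∀ i : ℕ, 1 / ((i + 4 : ℕ) : ℝ) ^ (2 * k)
          ≤ 16 / x ^ 2 * (1 / ((i + 4 : ℕ) : ℝ) ^ 2) := by
        intro i
        have hn4 : (4 : ℝ) ≤ ((i + 4 : ℕ) : ℝ) := by push_cast; linarith [Nat.cast_nonneg (α := ℝ) i]
        set n : ℝ := ((i + 4 : ℕ) : ℝ) with hn
        have hnpos : 0 < n := by linarith
        have hpowsplit : n ^ (2 * k) = n ^ 2 * n ^ (2 * m) := by
          rw [← pow_add]; congr 1; omega
        have h16m : (16 : ℝ) ^ m ≤ n ^ (2 * m) := by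
          calc (16 : ℝ) ^ m = 4 ^ (2 * m) := by rw [pow_mul]; norm_num
          _ ≤ n ^ (2 * m) := pow_le_pow_left₀ (by norm_num) hn4 _
        have hx2' : x ^ 2 = 16 * 16 ^ m := by
          rw [hx2, hk, pow_succ]; ring
        rw [hx2', show 16 / (16 * 16 ^ m) * (1 / n ^ 2) = 1 / (16 ^ m * n ^ 2) from by
          field_simp]
        apply one_div_le_one_div_of_le (by positivity)
        rw [hpowsplit]
        nlinarith [sq_nonneg n]
      have hsum2 : Summable (fun i : ℕ => 16 / x ^ 2 * (1 / ((i + 4 : ℕ) : ℝ) ^ 2)) := by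
        apply Summable.mul_left
        exact (summable_nat_add_iff 4).mpr hasSum_zeta_two.summable
      calc ∑' i : ℕ, 1 / ((i + 4 : ℕ) : ℝ) ^ (2 * k)
          ≤ ∑' i : ℕ, 16 / x ^ 2 * (1 / ((i + 4 : ℕ) : ℝ) ^ 2) :=
            Summable.tsum_le_tsum hterm htail hsum2
        _ = 16 / x ^ 2 * ∑' i : ℕ, 1 / ((i + 4 : ℕ) : ℝ) ^ 2 := tsum_mul_left
        _ ≤ 16 / x ^ 2 * 3 := by
            apply mul_le_mul_of_nonneg_left _ (by positivity)
            have hz2 := hasSum_zeta_two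
            have hsplit2 := Summable.sum_add_tsum_nat_add (f := fun n : ℕ => 1 / (n : ℝ) ^ 2) 4
              hz2.summable
            rw [hz2.tsum_eq] at hsplit2
            have hfin2 : 0 ≤ ∑ i ∈ Finset.range 4, 1 / (i : ℝ) ^ 2 := by positivity
            have hpi : π ^ 2 / 6 ≤ 3 := by nlinarith [Real.pi_le_four, Real.pi_pos]
            linarith only [hsplit2, hfin2, hpi]
        _ = 48 / x ^ 2 := by ring
    linarith only [hsplit, hfin, htb]
  -- combine
  have hfinal : (α - 1) / y < 48 / x ^ 2 := by
    have h1 : 1 + 1 / x + α / y < 1 + 1 / x + 1 / y + 48 / x ^ 2 := by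
      linarith only [hkey, hlow, hup]
    have h2 : α / y - 1 / y = (α - 1) / y := by ring
    linarith only [h1, h2]
  have hlast : 48 / x ^ 2 < (α - 1) / y := by
    rw [hx2, hy9, div_lt_div_iff₀ (by positivity) (by positivity)]
    have h916 : ((9 : ℝ) / 16) ^ k = 9 ^ k / 16 ^ k := div_pow 9 16 k
    have h16pos : (0:ℝ) < 16 ^ k := by positivity
    have hmul := mul_lt_mul_of_pos_right hchoice1 h16pos
    rw [h916] at hmul
    have hcan : 48 * ((9:ℝ) ^ k / 16 ^ k) * 16 ^ k = 48 * 9 ^ k := by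
      field_simp
    linarith only [hmul, hcan]
  linarith only [hfinal, hlast]
end

section
/- The constant β = 9(1 − 8/π²) is best possible in the upper bound for even-indexed Bernoulli numbers: if β is a real number with β < 9 such that |B_{2k}| < (2·(2k)!/(π^{2k}(2^{2k} − 1))) · 3^{2k}/(3^{2k} − β) for every natural number k ≥ 1, then β ≥ 9(1 − 8/π²). -/
theorem bernoulli_upper_bound_beta_best (β : ℝ) (hβ : β < 9)
    (h : ∀ k : ℕ, 1 ≤ k →
      |(bernoulli (2 * k) : ℝ)|
      < (2 * (Nat.factorial (2 * k) : ℝ) / (Real.pi ^ (2 * k) * ((2 : ℝ) ^ (2 * k) - 1))) *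
          ((3 : ℝ) ^ (2 * k) / ((3 : ℝ) ^ (2 * k) - β))) :
    9 * (1 - 8 / Real.pi ^ 2) ≤ β := by
  have h1 := h 1 le_rfl
  have hb : (bernoulli 2 : ℚ) = 1 / 6 := by
    rw [bernoulli, bernoulli'_two]; norm_num
  norm_num [hb] at h1
  -- h1 : |(1/6 : ℝ)| < ... simplified
  have hpi : 0 < Real.pi := Real.pi_pos
  have hpi2 : 0 < Real.pi ^ 2 := by positivity
  have h9 : (0:ℝ) < 9 - β := by linarith
  rw [div_mul_div_comm,
    div_lt_div_iff₀ (by norm_num) (mul_pos (by positivity) h9)] at h1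
  have h8 : 8 / Real.pi ^ 2 * Real.pi ^ 2 = 8 := div_mul_cancel₀ _ (ne_of_gt hpi2)
  nlinarith [h1, h8, hpi2]
end

section
/- The function h(x) = 3^x · [1 − 1/((1 − 2^{−x}) ζ(x))] is strictly decreasing on the interval [2, ∞). -/
open Real

/-- The real Riemann zeta function, `ζ(x) = ∑_{n=1}^∞ 1/n^x`. -/
noncomputable def zetaR (x : ℝ) : ℝ := ∑' n : ℕ, 1 / ((n : ℝ) + 1) ^ x

/-- `h(x) = 3^x · (1 − 1/((1 − 2^{−x}) ζ(x)))`. -/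
noncomputable def h (x : ℝ) : ℝ := (3 : ℝ) ^ x * (1 - 1 / ((1 - (2 : ℝ) ^ (-x)) * zetaR x))

lemma rpow_two_eq {c : ℝ} : c ^ (2:ℝ) = c ^ (2:ℕ) := by
  rw [← rpow_natCast c 2]; norm_num

lemma summable_aux {g : ℕ → ℝ} (hg : ∀ n : ℕ, (n:ℝ) + 1 ≤ g n) {x : ℝ} (hx : 2 ≤ x) :
    Summable (fun n : ℕ => 1 / (g n) ^ x) := by
  have base : Summable (fun n : ℕ => 1 / ((n:ℝ) + 1) ^ (2:ℕ)) := by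
    have := (summable_nat_add_iff 1).2 (Real.summable_one_div_nat_pow.2 (by norm_num : 1 < 2))
    simpa using this
  apply Summable.of_nonneg_of_le
    (fun n => div_nonneg zero_le_one (Real.rpow_nonneg (by linarith [hg n, Nat.cast_nonneg (α := ℝ) n]) x))
    (fun n => ?_) base
  have h1 : (0:ℝ) < (n:ℝ) + 1 := by positivity
  have h2 : ((n:ℝ)+1) ^ (2:ℕ) ≤ (g n) ^ x := by
    calc ((n:ℝ)+1) ^ (2:ℕ) = ((n:ℝ)+1) ^ (2:ℝ) := rpow_two_eq.symm
    _ ≤ ((n:ℝ)+1) ^ x := rpow_le_rpow_of_exponent_le (by linarith) hx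
    _ ≤ (g n) ^ x := rpow_le_rpow (by linarith) (hg n) (by linarith)
  exact one_div_le_one_div_of_le (by positivity) h2

lemma summable_zeta {x : ℝ} (hx : 2 ≤ x) : Summable (fun n : ℕ => 1 / ((n:ℝ) + 1) ^ x) :=
  summable_aux (fun n => le_refl _) hx

lemma summable_w {x : ℝ} (hx : 2 ≤ x) : Summable (fun n : ℕ => (3 / (2*(n:ℝ) + 3)) ^ x) := by
  have h1 : Summable (fun n : ℕ => 1 / (2*(n:ℝ) + 3) ^ x) :=
    summable_aux (fun n => by push_cast; linarith) hx
  have h2 := h1.mul_left ((3:ℝ) ^ x)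
  apply h2.congr
  intro n
  rw [div_rpow (by norm_num) (by positivity)]
  ring

lemma summable_v {x : ℝ} (hx : 2 ≤ x) : Summable (fun n : ℕ => (3 / (2*(n:ℝ) + 5)) ^ x) := by
  have h1 : Summable (fun n : ℕ => 1 / (2*(n:ℝ) + 5) ^ x) :=
    summable_aux (fun n => by push_cast; linarith) hx
  have h2 := h1.mul_left ((3:ℝ) ^ x)
  apply h2.congr
  intro n
  rw [div_rpow (by norm_num) (by positivity)]
  ring

lemma zeta_split {x : ℝ} (hx : 2 ≤ x) :
    (1 - (2:ℝ) ^ (-x)) * zetaR x = 1 + ∑' n : ℕ, 1 / (2*(n:ℝ) + 3) ^ x := by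
  set f : ℕ → ℝ := fun n => 1 / ((n:ℝ) + 1) ^ x with hf
  have he : Summable (fun k : ℕ => f (2*k)) := by
    have := summable_aux (g := fun n : ℕ => 2*(n:ℝ)+1) (fun n => by push_cast; linarith) hx
    apply this.congr; intro n; simp only [hf]; push_cast; ring_nf
  have ho : Summable (fun k : ℕ => f (2*k+1)) := by
    have := summable_aux (g := fun n : ℕ => 2*(n:ℝ)+2) (fun n => by push_cast; linarith) hx
    apply this.congr; intro n; simp [hf]; push_cast; ring_nf
  have hsplit := tsum_even_add_odd he ho
  have hodd : ∑' k : ℕ, f (2*k+1) = (2:ℝ) ^ (-x) * zetaR x := by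
    rw [zetaR, ← tsum_mul_left]
    congr 1; funext k
    have h1 : ((2*k+1:ℕ):ℝ) + 1 = 2 * ((k:ℝ) + 1) := by push_cast; ring
    rw [hf]; simp only []
    rw [h1, mul_rpow (by norm_num) (by positivity), Real.rpow_neg (by norm_num)]
    field_simp
  have heven : ∑' k : ℕ, f (2*k) = 1 + ∑' n : ℕ, 1 / (2*(n:ℝ) + 3) ^ x := by
    rw [Summable.tsum_eq_zero_add he]
    congr 1
    · simp [hf, Real.one_rpow]
    · congr 1; funext n
      have h1 : ((2*(n+1):ℕ):ℝ) + 1 = 2*(n:ℝ) + 3 := by push_cast; ring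
      rw [hf]; simp only []; rw [h1]
  rw [heven, hodd] at hsplit
  have : zetaR x = ∑' n : ℕ, f n := rfl
  rw [← this] at hsplit
  nlinarith [hsplit]

lemma w_eq {x : ℝ} (hx : 2 ≤ x) :
    ∑' n : ℕ, (3 / (2*(n:ℝ) + 3)) ^ x = (3:ℝ)^x * ∑' n : ℕ, 1 / (2*(n:ℝ) + 3) ^ x := by
  rw [← tsum_mul_left]
  congr 1; funext n
  rw [div_rpow (by norm_num) (by positivity)]
  ring

lemma h_eq {x : ℝ} (hx : 2 ≤ x) :
    h x = (∑' n : ℕ, (3 / (2*(n:ℝ) + 3)) ^ x) /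
      (1 + (3:ℝ)^(-x) * ∑' n : ℕ, (3 / (2*(n:ℝ) + 3)) ^ x) := by
  have hT : (0:ℝ) ≤ ∑' n : ℕ, 1 / (2*(n:ℝ) + 3) ^ x :=
    tsum_nonneg (fun n => by positivity)
  set T := ∑' n : ℕ, 1 / (2*(n:ℝ) + 3) ^ x with hTdef
  have h3 : (0:ℝ) < (3:ℝ)^x := rpow_pos_of_pos (by norm_num) x
  have h3n : (3:ℝ)^(-x) = ((3:ℝ)^x)⁻¹ := by rw [Real.rpow_neg (by norm_num)]
  rw [h, zeta_split hx, w_eq hx, ← hTdef, h3n]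
  have h1T : (0:ℝ) < 1 + T := by linarith
  field_simp
  ring

-- per-term bound: q^a - q^b ≥ θ (3q)^a (3^{-a} - 3^{-b})
lemma per_term {q θ a b : ℝ} (hq : 0 < q) (hθ0 : 0 ≤ θ) (hθ1 : θ ≤ 1)
    (hqθ : q * (3:ℝ)^θ ≤ 1) (hab : a < b) :
    θ * (3*q)^a * ((3:ℝ)^(-a) - (3:ℝ)^(-b)) ≤ q^a - q^b := by
  have h3 : (0:ℝ) < 3 := by norm_num
  set t := b - a with htdef
  have ht0 : 0 < t := by simp [htdef]; linarith
  set s := (3:ℝ)^(-t) with hsdef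
  have hs0 : 0 < s := rpow_pos_of_pos h3 _
  have hs1 : s ≤ 1 := by
    rw [hsdef]
    exact rpow_le_one_of_one_le_of_nonpos (by norm_num) (by linarith)
  -- q ≤ 3^{-θ}
  have hq3 : q ≤ (3:ℝ)^(-θ) := by
    have hp : (0:ℝ) < (3:ℝ)^θ := rpow_pos_of_pos h3 θ
    rw [Real.rpow_neg h3.le, inv_eq_one_div, le_div_iff₀ hp]
    exact hqθ
  -- q^t ≤ s^θ
  have h1 : q^t ≤ s^θ := by
    calc q^t ≤ ((3:ℝ)^(-θ))^t := rpow_le_rpow hq.le hq3 ht0.le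
    _ = (3:ℝ)^(-θ*t) := (Real.rpow_mul h3.le (-θ) t).symm
    _ = s^θ := by rw [hsdef, ← Real.rpow_mul h3.le]; congr 1; ring
  -- s^θ ≤ θ s + (1-θ)
  have h2 : s^θ ≤ θ*s + (1-θ) := by
    have := Real.geom_mean_le_arith_mean2_weighted hθ0 (by linarith : 0 ≤ 1-θ)
      hs0.le zero_le_one (by ring)
    simpa using this
  -- q^b = q^a * q^t
  have hb : q^b = q^a * q^t := by
    rw [← Real.rpow_add hq]; congr 1; rw [htdef]; ring
  have hqa : 0 < q^a := rpow_pos_of_pos hq _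
  -- (3q)^a * 3^{-a} = q^a
  have h4 : (3*q)^a * (3:ℝ)^(-a) = q^a := by
    rw [mul_rpow h3.le hq.le, Real.rpow_neg h3.le]
    field_simp [ne_of_gt (rpow_pos_of_pos h3 a)]
  -- 3^{-b} = 3^{-a} * s
  have h5 : (3:ℝ)^(-b) = (3:ℝ)^(-a) * s := by
    rw [hsdef, ← Real.rpow_add h3]; congr 1; rw [htdef]; ring
  have key : θ * (1 - s) ≤ 1 - q^t := by nlinarith
  calc θ * (3*q)^a * ((3:ℝ)^(-a) - (3:ℝ)^(-b))
      = θ * (1-s) * ((3*q)^a * (3:ℝ)^(-a)) := by rw [h5]; ring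
    _ = θ * (1-s) * q^a := by rw [h4]
    _ ≤ (1 - q^t) * q^a := by
        apply mul_le_mul_of_nonneg_right key hqa.le
    _ = q^a - q^b := by rw [hb]; ring

lemma rpow_rat_le {p r : ℕ} {c : ℝ} (hc : 0 < c) (hr : r ≠ 0) (h : (3:ℝ)^(p:ℕ) ≤ c^(r:ℕ)) :
    (3:ℝ)^((p:ℝ)/(r:ℝ)) ≤ c := by
  have h3 : (0:ℝ) < 3 := by norm_num
  apply le_of_pow_le_pow_left₀ hr hc.le
  have : ((3:ℝ)^((p:ℝ)/(r:ℝ)))^(r:ℕ) = (3:ℝ)^(p:ℕ) := by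
    rw [← rpow_natCast ((3:ℝ)^((p:ℝ)/(r:ℝ))) r, ← Real.rpow_mul h3.le,
      div_mul_cancel₀, rpow_natCast]
    exact_mod_cast hr
  rw [this]; exact h

lemma fact1 : (3:ℝ)^((23:ℝ)/50) ≤ 5/3 := by
  have := rpow_rat_le (p := 23) (r := 50) (c := (5:ℝ)/3) (by norm_num) (by norm_num) ?_
  · exact_mod_cast this
  · rw [div_pow, le_div_iff₀ (by positivity)]
    norm_num

lemma fact2 : (3:ℝ)^((77:ℝ)/100) ≤ 7/3 := by
  have := rpow_rat_le (p := 77) (r := 100) (c := (7:ℝ)/3) (by norm_num) (by norm_num) ?_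
  · exact_mod_cast this
  · rw [div_pow, le_div_iff₀ (by positivity)]
    norm_num

lemma v2_le : ∑' n : ℕ, (3 / (2*(n:ℝ) + 5)) ^ (2:ℝ) ≤ 9/8 := by
  apply Real.tsum_le_of_sum_range_le (fun n => by positivity)
  intro n
  have hterm : ∀ i : ℕ, (3/(2*(i:ℝ)+5))^(2:ℝ) ≤ (9/4)*(1/((i:ℝ)+2) - 1/((i:ℝ)+3)) := by
    intro i
    have h2 : (0:ℝ) < (i:ℝ)+2 := by positivity
    have h3 : (0:ℝ) < (i:ℝ)+3 := by positivity
    have hr : 1/((i:ℝ)+2) - 1/((i:ℝ)+3) = 1/(((i:ℝ)+2)*((i:ℝ)+3)) := by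
      field_simp; ring
    rw [rpow_two_eq, hr, div_pow, mul_one_div, div_le_div_iff₀ (by positivity) (by positivity)]
    nlinarith [sq_nonneg ((i:ℝ))]
  calc ∑ i ∈ Finset.range n, (3/(2*(i:ℝ)+5))^(2:ℝ)
      ≤ ∑ i ∈ Finset.range n, (9/4)*(1/((i:ℝ)+2) - 1/((i:ℝ)+3)) :=
        Finset.sum_le_sum (fun i _ => hterm i)
    _ = (9/4) * ∑ i ∈ Finset.range n, ((fun j : ℕ => 1/((j:ℝ)+2)) i - (fun j : ℕ => 1/((j:ℝ)+2)) (i+1)) := by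
        rw [← Finset.mul_sum]; congr 1; apply Finset.sum_congr rfl
        intro i _; push_cast; ring_nf
    _ = (9/4) * ((fun j : ℕ => 1/((j:ℝ)+2)) 0 - (fun j : ℕ => 1/((j:ℝ)+2)) n) := by
        rw [Finset.sum_range_sub' (fun j : ℕ => 1/((j:ℝ)+2)) n]
    _ ≤ 9/8 := by
        have hn : (0:ℝ) ≤ 1/((n:ℝ)+2) := by positivity
        simp only [Nat.cast_zero]
        nlinarith

lemma v_le {a : ℝ} (ha : 2 ≤ a) :
    ∑' n : ℕ, (3 / (2*(n:ℝ) + 5)) ^ a ≤ (9/8) * ((3:ℝ)/5) ^ (a-2) := by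
  have hv2 : Summable (fun n : ℕ => (3 / (2*(n:ℝ) + 5)) ^ (2:ℝ)) := summable_v (le_refl 2)
  have hstep : ∀ n : ℕ, (3/(2*(n:ℝ)+5))^a ≤ ((3:ℝ)/5)^(a-2) * (3/(2*(n:ℝ)+5))^(2:ℝ) := by
    intro n
    have hb : (0:ℝ) < 3/(2*(n:ℝ)+5) := by positivity
    have : (3/(2*(n:ℝ)+5))^a = (3/(2*(n:ℝ)+5))^(a-2) * (3/(2*(n:ℝ)+5))^(2:ℝ) := by
      rw [← Real.rpow_add hb]; congr 1; ring
    rw [this]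
    apply mul_le_mul_of_nonneg_right _ (rpow_nonneg hb.le _)
    apply rpow_le_rpow hb.le _ (by linarith)
    rw [div_le_div_iff₀ (by positivity) (by norm_num)]
    push_cast; nlinarith [Nat.cast_nonneg (α := ℝ) n]
  calc ∑' n : ℕ, (3/(2*(n:ℝ)+5))^a
      ≤ ∑' n : ℕ, ((3:ℝ)/5)^(a-2) * (3/(2*(n:ℝ)+5))^(2:ℝ) :=
        Summable.tsum_le_tsum hstep (summable_v ha) (hv2.mul_left _)
    _ = ((3:ℝ)/5)^(a-2) * ∑' n : ℕ, (3/(2*(n:ℝ)+5))^(2:ℝ) := tsum_mul_left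
    _ ≤ ((3:ℝ)/5)^(a-2) * (9/8) := by
        apply mul_le_mul_of_nonneg_left v2_le (rpow_nonneg (by norm_num) _)
    _ = (9/8) * ((3:ℝ)/5)^(a-2) := by ring

lemma key_numeric {P v : ℝ} (hv0 : 0 < v) (hv1 : v ≤ 1) (hm1 : 81/25 ≤ P * v) :
    (1 + (9/8)*v)^2 < (23/50)*P + (77/100)*(81/49) + 1 + (81/121 + 81/169 + 81/225)*v := by
  nlinarith [mul_pos hv0 hv0, sq_nonneg v, mul_nonneg (sub_nonneg.2 hv1) (sq_nonneg v),
    mul_nonneg (sub_nonneg.2 hv1) hv0.le, mul_pos (mul_pos hv0 hv0) hv0]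

-- r^(2)·(3/5)^(a-2) ≤ r^a  for 3/5 ≤ r, a ≥ 2
lemma m3 {r a : ℝ} (hr : 3/5 ≤ r) (ha : 2 ≤ a) :
    r^(2:ℕ) * ((3:ℝ)/5)^(a-2) ≤ r^a := by
  have hr0 : (0:ℝ) < r := by linarith
  have : r^a = r^(2:ℝ) * r^(a-2) := by rw [← Real.rpow_add hr0]; congr 1; ring
  rw [this, rpow_two_eq]
  apply mul_le_mul_of_nonneg_left _ (by positivity)
  exact rpow_le_rpow (by norm_num) hr (by linarith)

-- 81/25 ≤ (9/5)^a · (3/5)^(a-2)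
lemma m1 {a : ℝ} (ha : 2 ≤ a) : 81/25 ≤ ((9:ℝ)/5)^a * ((3:ℝ)/5)^(a-2) := by
  have h1 : ((9:ℝ)/5)^a = ((9:ℝ)/5)^(2:ℝ) * ((9:ℝ)/5)^(a-2) := by
    rw [← Real.rpow_add (by norm_num)]; congr 1; ring
  have h2 : ((9:ℝ)/5)^(a-2) * ((3:ℝ)/5)^(a-2) = ((27:ℝ)/25)^(a-2) := by
    rw [← Real.mul_rpow (by norm_num) (by norm_num)]; norm_num
  have h3 : (1:ℝ) ≤ ((27:ℝ)/25)^(a-2) := by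
    calc (1:ℝ) = ((27:ℝ)/25)^(0:ℝ) := (rpow_zero _).symm
    _ ≤ ((27:ℝ)/25)^(a-2) := rpow_le_rpow_of_exponent_le (by norm_num) (by linarith)
  calc (81:ℝ)/25 = (81/25) * 1 := by ring
  _ ≤ (81/25) * ((27:ℝ)/25)^(a-2) := by linarith
  _ = ((9:ℝ)/5)^(2:ℝ) * ((27:ℝ)/25)^(a-2) := by rw [rpow_two_eq]; norm_num
  _ = ((9:ℝ)/5)^a * ((3:ℝ)/5)^(a-2) := by rw [h1, ← h2]; ring

-- (9/7)^2 ≤ (9/7)^a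
lemma m2 {a : ℝ} (ha : 2 ≤ a) : (81:ℝ)/49 ≤ ((9:ℝ)/7)^a := by
  calc (81:ℝ)/49 = ((9:ℝ)/7)^(2:ℝ) := by rw [rpow_two_eq]; norm_num
  _ ≤ ((9:ℝ)/7)^a := rpow_le_rpow_of_exponent_le (by norm_num) ha

set_option maxHeartbeats 2000000 in
theorem h_strictAntiOn : StrictAntiOn h (Set.Ici (2 : ℝ)) := by
  intro a ha b hb hab
  simp only [Set.mem_Ici] at ha hb
  have hb2 : (2:ℝ) ≤ b := le_trans ha hab.le
  set Wa := ∑' n : ℕ, (3 / (2*(n:ℝ) + 3)) ^ a with hWa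
  set Wb := ∑' n : ℕ, (3 / (2*(n:ℝ) + 3)) ^ b with hWb
  set v := ((3:ℝ)/5)^(a-2) with hv
  set Δ := (3:ℝ)^(-a) - (3:ℝ)^(-b) with hΔdef
  have hv0 : 0 < v := rpow_pos_of_pos (by norm_num) _
  have hv1 : v ≤ 1 := rpow_le_one (by norm_num) (by norm_num) (by linarith)
  have hΔ : 0 < Δ := by
    rw [hΔdef, sub_pos]
    exact Real.rpow_lt_rpow_left_iff (by norm_num : (1:ℝ) < 3) |>.2 (by linarith)
  -- termwise monotonicity
  have hmono : ∀ n : ℕ, (3 / (2*(n:ℝ) + 3)) ^ b ≤ (3 / (2*(n:ℝ) + 3)) ^ a := by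
    intro n
    apply rpow_le_rpow_of_exponent_ge (by positivity)
    · rw [div_le_one (by positivity)]; push_cast; linarith [Nat.cast_nonneg (α := ℝ) n]
    · exact hab.le
  have hWbWa : Wb ≤ Wa := Summable.tsum_le_tsum hmono (summable_w hb2) (summable_w ha)
  have hWb1 : (1:ℝ) ≤ Wb := by
    have h0 := Summable.le_tsum (summable_w hb2) 0 (fun i _ => by positivity)
    simp only [Nat.cast_zero] at h0
    norm_num at h0
    exact h0
  have hWa1 : (1:ℝ) ≤ Wa := le_trans hWb1 hWbWa
  -- upper bound on Wa
  have hWa_le : Wa ≤ 1 + (9/8) * v := by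
    rw [hWa, Summable.tsum_eq_zero_add (summable_w ha)]
    have e0 : (3 / (2*((0:ℕ):ℝ) + 3)) ^ a = 1 := by norm_num
    have e1 : ∀ n : ℕ, (3 / (2*(((n+1):ℕ):ℝ) + 3)) ^ a = (3 / (2*(n:ℝ) + 5)) ^ a := by
      intro n; congr 2; push_cast; ring
    rw [e0]
    have : ∑' n : ℕ, (3 / (2*(((n+1):ℕ):ℝ) + 3)) ^ a = ∑' n : ℕ, (3 / (2*(n:ℝ) + 5)) ^ a := by
      congr 1; funext n; exact e1 n
    rw [this]
    linarith [v_le ha]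
  -- lower bound on Wa - Wb
  have hdiff : Δ * ((23/50)*((9:ℝ)/5)^a + (77/100)*(81/49) + 1 + (81/121 + 81/169 + 81/225)*v)
      ≤ Wa - Wb := by
    have hsub : Wa - Wb = ∑' n : ℕ, ((3 / (2*(n:ℝ) + 3)) ^ a - (3 / (2*(n:ℝ) + 3)) ^ b) := by
      rw [Summable.tsum_sub (summable_w ha) (summable_w hb2)]
    have h7 : ∑ n ∈ Finset.range 7, ((3 / (2*(n:ℝ) + 3)) ^ a - (3 / (2*(n:ℝ) + 3)) ^ b)
        ≤ ∑' n : ℕ, ((3 / (2*(n:ℝ) + 3)) ^ a - (3 / (2*(n:ℝ) + 3)) ^ b) :=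
      Summable.sum_le_tsum _ (fun i _ => sub_nonneg.2 (hmono i))
        ((summable_w ha).sub (summable_w hb2))
    have hexp : ∑ n ∈ Finset.range 7, ((3 / (2*(n:ℝ) + 3)) ^ a - (3 / (2*(n:ℝ) + 3)) ^ b)
        = (((1:ℝ))^a - ((1:ℝ))^b) + (((3:ℝ)/5)^a - ((3:ℝ)/5)^b) + (((3:ℝ)/7)^a - ((3:ℝ)/7)^b)
          + (((1:ℝ)/3)^a - ((1:ℝ)/3)^b) + (((3:ℝ)/11)^a - ((3:ℝ)/11)^b)
          + (((3:ℝ)/13)^a - ((3:ℝ)/13)^b) + (((1:ℝ)/5)^a - ((1:ℝ)/5)^b) := by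
      norm_num [Finset.sum_range_succ]
      ring
    -- individual bounds
    have t1 : (23/50) * ((9:ℝ)/5)^a * Δ ≤ ((3:ℝ)/5)^a - ((3:ℝ)/5)^b := by
      have := per_term (q := 3/5) (θ := 23/50) (a := a) (b := b) (by norm_num) (by norm_num)
        (by norm_num) (by nlinarith [fact1, rpow_pos_of_pos (show (0:ℝ)<3 by norm_num) ((23:ℝ)/50)]) hab
      convert this using 3
      norm_num
    have t2 : (77/100) * ((9:ℝ)/7)^a * Δ ≤ ((3:ℝ)/7)^a - ((3:ℝ)/7)^b := by
      have := per_term (q := 3/7) (θ := 77/100) (a := a) (b := b) (by norm_num) (by norm_num)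
        (by norm_num) (by nlinarith [fact2, rpow_pos_of_pos (show (0:ℝ)<3 by norm_num) ((77:ℝ)/100)]) hab
      convert this using 3
      norm_num
    have t3 : 1 * ((1:ℝ))^a * Δ ≤ ((1:ℝ)/3)^a - ((1:ℝ)/3)^b := by
      have := per_term (q := 1/3) (θ := 1) (a := a) (b := b) (by norm_num) (by norm_num)
        (by norm_num) (by rw [Real.rpow_one]; norm_num) hab
      convert this using 3
      norm_num
    have t4 : 1 * ((9:ℝ)/11)^a * Δ ≤ ((3:ℝ)/11)^a - ((3:ℝ)/11)^b := by
      have := per_term (q := 3/11) (θ := 1) (a := a) (b := b) (by norm_num) (by norm_num)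
        (by norm_num) (by rw [Real.rpow_one]; norm_num) hab
      convert this using 3
      norm_num
    have t5 : 1 * ((9:ℝ)/13)^a * Δ ≤ ((3:ℝ)/13)^a - ((3:ℝ)/13)^b := by
      have := per_term (q := 3/13) (θ := 1) (a := a) (b := b) (by norm_num) (by norm_num)
        (by norm_num) (by rw [Real.rpow_one]; norm_num) hab
      convert this using 3
      norm_num
    have t6 : 1 * ((3:ℝ)/5)^a * Δ ≤ ((1:ℝ)/5)^a - ((1:ℝ)/5)^b := by
      have := per_term (q := 1/5) (θ := 1) (a := a) (b := b) (by norm_num) (by norm_num)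
        (by norm_num) (by rw [Real.rpow_one]; norm_num) hab
      convert this using 3
      norm_num
    have t0 : ((1:ℝ))^a - ((1:ℝ))^b = 0 := by rw [Real.one_rpow, Real.one_rpow]; ring
    -- lower bounds on the growing/shrinking powers
    have u2 : (77/100) * (81/49) * Δ ≤ (77/100) * ((9:ℝ)/7)^a * Δ := by
      have := m2 ha; nlinarith
    have u4 : (81/121) * v * Δ ≤ 1 * ((9:ℝ)/11)^a * Δ := by
      have := m3 (r := (9:ℝ)/11) (by norm_num) ha; rw [hv]; nlinarith
    have u5 : (81/169) * v * Δ ≤ 1 * ((9:ℝ)/13)^a * Δ := by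
      have := m3 (r := (9:ℝ)/13) (by norm_num) ha; rw [hv]; nlinarith
    have u6 : (81/225) * v * Δ ≤ 1 * ((3:ℝ)/5)^a * Δ := by
      have := m3 (r := (3:ℝ)/5) (by norm_num) ha; rw [hv]; nlinarith
    have u3 : 1 * Δ ≤ 1 * ((1:ℝ))^a * Δ := by rw [Real.one_rpow]; linarith
    calc Δ * ((23/50)*((9:ℝ)/5)^a + (77/100)*(81/49) + 1 + (81/121 + 81/169 + 81/225)*v)
        ≤ (((1:ℝ))^a - ((1:ℝ))^b) + (((3:ℝ)/5)^a - ((3:ℝ)/5)^b) + (((3:ℝ)/7)^a - ((3:ℝ)/7)^b)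
          + (((1:ℝ)/3)^a - ((1:ℝ)/3)^b) + (((3:ℝ)/11)^a - ((3:ℝ)/11)^b)
          + (((3:ℝ)/13)^a - ((3:ℝ)/13)^b) + (((1:ℝ)/5)^a - ((1:ℝ)/5)^b) := by
          linarith [t1, le_trans u2 t2, le_trans u3 t3, le_trans u4 t4, le_trans u5 t5,
            le_trans u6 t6]
      _ = ∑ n ∈ Finset.range 7, ((3 / (2*(n:ℝ) + 3)) ^ a - (3 / (2*(n:ℝ) + 3)) ^ b) := hexp.symm
      _ ≤ ∑' n : ℕ, ((3 / (2*(n:ℝ) + 3)) ^ a - (3 / (2*(n:ℝ) + 3)) ^ b) := h7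
      _ = Wa - Wb := hsub.symm
  -- key inequality
  have hkey : Δ * (Wa * Wb) < Wa - Wb := by
    have hP : 81/25 ≤ ((9:ℝ)/5)^a * v := m1 ha
    have hnum := key_numeric hv0 hv1 hP
    have hWaWb : Wa * Wb ≤ (1 + (9/8)*v)^2 := by nlinarith
    nlinarith
  -- conclude
  rw [h_eq ha, h_eq hb2, ← hWa, ← hWb]
  have hDa : (0:ℝ) < 1 + (3:ℝ)^(-a) * Wa := by
    have := rpow_pos_of_pos (show (0:ℝ) < 3 by norm_num) (-a); nlinarith
  have hDb : (0:ℝ) < 1 + (3:ℝ)^(-b) * Wb := by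
    have := rpow_pos_of_pos (show (0:ℝ) < 3 by norm_num) (-b); nlinarith
  rw [div_lt_div_iff₀ hDb hDa]
  have hΔeq : (3:ℝ)^(-b) = (3:ℝ)^(-a) - Δ := by rw [hΔdef]; ring
  rw [hΔeq]
  ring_nf
  nlinarith [hkey]
end

section
/- The function h(x) = 3^x · [1 − 1/((1 − 2^{−x}) ζ(x))] tends to 1 as x → ∞. -/
open Filter Real

/-- auxiliary: `F x n = n^{-x}` (with `F x 0 = 0` for `x ≠ 0`). -/
noncomputable def F (x : ℝ) (n : ℕ) : ℝ := 1 / (n : ℝ) ^ x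

lemma F_summable {x : ℝ} (hx : 1 < x) : Summable (F x) :=
  Real.summable_one_div_nat_rpow.mpr hx

lemma F_comp {x : ℝ} (hx : 1 < x) (c : ℕ) : Summable (fun k => F x (2 * k + c)) :=
  (F_summable hx).comp_injective (fun a b hab => by omega)

lemma F_two_mul {x : ℝ} (hx : 0 < x) (k : ℕ) : F x (2 * k) = (2 : ℝ) ^ (-x) * F x k := by
  unfold F
  rcases Nat.eq_zero_or_pos k with h | h
  · subst h; simp [Real.zero_rpow hx.ne']
  · have hk : (0 : ℝ) < (k : ℝ) := by exact_mod_cast h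
    push_cast
    rw [Real.mul_rpow (by norm_num) hk.le, Real.rpow_neg (by norm_num)]
    have h2 : (0 : ℝ) < (2 : ℝ) ^ x := Real.rpow_pos_of_pos (by norm_num) x
    have h3 : (0 : ℝ) < (k : ℝ) ^ x := Real.rpow_pos_of_pos hk x
    field_simp

lemma zetaR_eq {x : ℝ} (hx : 1 < x) : zetaR x = ∑' n, F x n := by
  rw [Summable.tsum_eq_zero_add (F_summable hx)]
  have h0 : F x 0 = 0 := by
    simp [F, Real.zero_rpow (by linarith : x ≠ 0)]
  rw [h0, zero_add, zetaR]
  refine tsum_congr fun n => ?_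
  simp only [F]
  push_cast
  ring_nf

lemma odd_sum {x : ℝ} (hx : 1 < x) :
    (1 - (2 : ℝ) ^ (-x)) * zetaR x = ∑' k, F x (2 * k + 1) := by
  have hx0 : (0 : ℝ) < x := by linarith
  have he : Summable (fun k => F x (2 * k)) := F_comp hx 0
  have ho := F_comp hx 1
  have key := tsum_even_add_odd he ho
  have heven : ∑' k, F x (2 * k) = (2 : ℝ) ^ (-x) * zetaR x := by
    rw [zetaR_eq hx, ← tsum_mul_left]
    exact tsum_congr fun k => F_two_mul hx0 k
  rw [← zetaR_eq hx, heven] at key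
  linarith [key]

/-- per-term rewrite: `(3/(2k+c))^x = 3^x * F x (2k+c)` for `c ≥ 1`. -/
lemma term_eq {x : ℝ} (c : ℕ) (hc : 0 < c) (k : ℕ) :
    ((3 : ℝ) / (2 * (k : ℝ) + c)) ^ x = (3 : ℝ) ^ x * F x (2 * k + c) := by
  have h1 : ((2 * k + c : ℕ) : ℝ) = 2 * (k : ℝ) + c := by push_cast; ring
  have h2 : (0 : ℝ) < 2 * (k : ℝ) + c := by
    have : (0 : ℝ) < (c : ℝ) := by exact_mod_cast hc
    positivity
  rw [F, h1, Real.div_rpow (by norm_num) h2.le]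
  ring

lemma sum3_summable {x : ℝ} (hx : 1 < x) (c : ℕ) (hc : 0 < c) :
    Summable (fun k : ℕ => ((3 : ℝ) / (2 * (k : ℝ) + c)) ^ x) := by
  have := (F_comp hx c).mul_left ((3 : ℝ) ^ x)
  exact this.congr fun k => (term_eq c hc k).symm

/-- `G x = ∑_{k} (3/(2k+3))^x`. -/
noncomputable def G (x : ℝ) : ℝ := ∑' k : ℕ, ((3 : ℝ) / (2 * (k : ℝ) + 3)) ^ x

lemma key1 {x : ℝ} (hx : 1 < x) :
    (1 - (2 : ℝ) ^ (-x)) * zetaR x = 1 + (3 : ℝ) ^ (-x) * G x := by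
  rw [odd_sum hx, Summable.tsum_eq_zero_add (F_comp hx 1)]
  have h1 : F x (2 * 0 + 1) = 1 := by simp [F]
  rw [h1]
  congr 1
  have hG : G x = (3 : ℝ) ^ x * ∑' k, F x (2 * k + 3) := by
    rw [G, ← tsum_mul_left]
    exact tsum_congr fun k => term_eq 3 (by norm_num) k
  rw [hG, ← mul_assoc, Real.rpow_neg (by norm_num : (0:ℝ) ≤ 3),
    inv_mul_cancel₀ (Real.rpow_pos_of_pos (by norm_num) x).ne', one_mul]
  refine tsum_congr fun k => ?_
  congr 1

lemma G_nonneg (x : ℝ) : 0 ≤ G x :=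
  tsum_nonneg fun k => Real.rpow_nonneg (by positivity) x

lemma G_eq {x : ℝ} (hx : 1 < x) :
    G x = 1 + ∑' k : ℕ, ((3 : ℝ) / (2 * (k : ℝ) + 5)) ^ x := by
  have hs := Summable.tsum_eq_zero_add (sum3_summable hx 3 (by norm_num))
  push_cast at hs
  rw [G, hs]
  have h0 : ((3 : ℝ) / (2 * (0 : ℝ) + 3)) ^ x = 1 := by norm_num
  rw [h0]
  congr 1
  refine tsum_congr fun k => ?_
  ring_nf

noncomputable def Cb : ℝ := ∑' k : ℕ, ((3 : ℝ) / (2 * (k : ℝ) + 5)) ^ (2 : ℝ)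

lemma tail_bound {x : ℝ} (hx : 2 ≤ x) :
    ∑' k : ℕ, ((3 : ℝ) / (2 * (k : ℝ) + 5)) ^ x ≤ Cb * (3 / 5 : ℝ) ^ (x - 2) := by
  have hx1 : (1 : ℝ) < x := by linarith
  have hbd : ∀ k : ℕ, ((3 : ℝ) / (2 * (k : ℝ) + 5)) ^ x ≤
      ((3 : ℝ) / (2 * (k : ℝ) + 5)) ^ (2 : ℝ) * (3 / 5 : ℝ) ^ (x - 2) := by
    intro k
    have hpos : (0 : ℝ) < (3 : ℝ) / (2 * (k : ℝ) + 5) := by positivity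
    have hle : (3 : ℝ) / (2 * (k : ℝ) + 5) ≤ 3 / 5 := by
      apply div_le_div_of_nonneg_left (by norm_num) (by norm_num)
      have : (0 : ℝ) ≤ (k : ℝ) := Nat.cast_nonneg k
      linarith
    calc ((3 : ℝ) / (2 * (k : ℝ) + 5)) ^ x
        = ((3 : ℝ) / (2 * (k : ℝ) + 5)) ^ ((2 : ℝ) + (x - 2)) := by ring_nf
      _ = ((3 : ℝ) / (2 * (k : ℝ) + 5)) ^ (2 : ℝ) *
            ((3 : ℝ) / (2 * (k : ℝ) + 5)) ^ (x - 2) := Real.rpow_add hpos _ _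
      _ ≤ ((3 : ℝ) / (2 * (k : ℝ) + 5)) ^ (2 : ℝ) * (3 / 5 : ℝ) ^ (x - 2) := by
          apply mul_le_mul_of_nonneg_left
          · exact Real.rpow_le_rpow hpos.le hle (by linarith)
          · exact Real.rpow_nonneg hpos.le _
  have hsum2 : Summable (fun k : ℕ => ((3 : ℝ) / (2 * (k : ℝ) + 5)) ^ (2 : ℝ)) :=
    sum3_summable (by norm_num) 5 (by norm_num)
  calc ∑' k : ℕ, ((3 : ℝ) / (2 * (k : ℝ) + 5)) ^ x
      ≤ ∑' k : ℕ, ((3 : ℝ) / (2 * (k : ℝ) + 5)) ^ (2 : ℝ) * (3 / 5 : ℝ) ^ (x - 2) :=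
        Summable.tsum_le_tsum hbd (sum3_summable hx1 5 (by norm_num)) (hsum2.mul_right _)
    _ = Cb * (3 / 5 : ℝ) ^ (x - 2) := tsum_mul_right

lemma G_tendsto : Tendsto G atTop (nhds 1) := by
  have hT : Tendsto (fun x : ℝ => ∑' k : ℕ, ((3 : ℝ) / (2 * (k : ℝ) + 5)) ^ x)
      atTop (nhds 0) := by
    have hb : Tendsto (fun x : ℝ => Cb * (3 / 5 : ℝ) ^ (x - 2)) atTop (nhds 0) := by
      have h1 : Tendsto (fun x : ℝ => (3 / 5 : ℝ) ^ x) atTop (nhds 0) :=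
        tendsto_rpow_atTop_of_base_lt_one _ (by norm_num) (by norm_num)
      have h2 : Tendsto (fun x : ℝ => x - 2) atTop atTop :=
        tendsto_atTop_add_const_right _ _ tendsto_id
      have := (h1.comp h2).const_mul Cb
      simpa using this
    refine tendsto_of_tendsto_of_tendsto_of_le_of_le' tendsto_const_nhds hb ?_ ?_
    · exact Eventually.of_forall fun x =>
        tsum_nonneg fun k => Real.rpow_nonneg (by positivity) x
    · filter_upwards [eventually_ge_atTop (2 : ℝ)] with x hx using tail_bound hx
  have : Tendsto (fun x : ℝ => 1 + ∑' k : ℕ, ((3 : ℝ) / (2 * (k : ℝ) + 5)) ^ x)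
      atTop (nhds (1 + 0)) := tendsto_const_nhds.add hT
  rw [add_zero] at this
  refine this.congr' ?_
  filter_upwards [eventually_gt_atTop (1 : ℝ)] with x hx
  exact (G_eq hx).symm

lemma three_neg_tendsto : Tendsto (fun x : ℝ => (3 : ℝ) ^ (-x)) atTop (nhds 0) := by
  have h1 : Tendsto (fun x : ℝ => ((3 : ℝ)⁻¹) ^ x) atTop (nhds 0) :=
    tendsto_rpow_atTop_of_base_lt_one _ (by norm_num) (by norm_num)
  refine h1.congr fun x => ?_
  rw [Real.inv_rpow (by norm_num), ← Real.rpow_neg (by norm_num)]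

lemma D_tendsto : Tendsto (fun x => (1 - (2 : ℝ) ^ (-x)) * zetaR x) atTop (nhds 1) := by
  have : Tendsto (fun x : ℝ => 1 + (3 : ℝ) ^ (-x) * G x) atTop (nhds (1 + 0 * 1)) :=
    tendsto_const_nhds.add (three_neg_tendsto.mul G_tendsto)
  rw [zero_mul, add_zero] at this
  refine this.congr' ?_
  filter_upwards [eventually_gt_atTop (1 : ℝ)] with x hx
  exact (key1 hx).symm

theorem h_tendsto_one : Filter.Tendsto h Filter.atTop (nhds 1) := by
  have main : Tendsto (fun x => G x / ((1 - (2 : ℝ) ^ (-x)) * zetaR x)) atTop (nhds 1) := by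
    have := G_tendsto.div D_tendsto one_ne_zero
    simpa [Pi.div_def] using this
  refine main.congr' ?_
  filter_upwards [eventually_gt_atTop (1 : ℝ)] with x hx
  have hD : (1 - (2 : ℝ) ^ (-x)) * zetaR x = 1 + (3 : ℝ) ^ (-x) * G x := key1 hx
  have hDpos : (0 : ℝ) < (1 - (2 : ℝ) ^ (-x)) * zetaR x := by
    rw [hD]
    have := mul_nonneg (Real.rpow_nonneg (by norm_num : (0:ℝ) ≤ 3) (-x)) (G_nonneg x)
    linarith
  have h3 : (3 : ℝ) ^ x * ((1 - (2 : ℝ) ^ (-x)) * zetaR x - 1) = G x := by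
    rw [hD]
    rw [show (1 : ℝ) + (3 : ℝ) ^ (-x) * G x - 1 = (3 : ℝ) ^ (-x) * G x by ring,
      ← mul_assoc, ← Real.rpow_add (by norm_num : (0:ℝ) < 3)]
    simp
  rw [h]
  field_simp
  rw [← h3]
  rw [mul_div_assoc, sub_div, div_self hDpos.ne']
end

section
/- Let p_1 = 3, p_2 = 5, p_3 = 7, p_4 = 11, … be the increasing enumeration of the odd prime numbers and fix a natural number m ≥ 2. The constant β' = p_m²·[1 − (8/π²)·Π_{n=1}^{m−1} p_n²/(p_n² − 1)] is best possible on the right: if c is a real number with c < p_m² such that (π^{2k}(2^{2k} − 1)/(2·(2k)!)) · |B_{2k}| < (Π_{n=1}^{m−1} p_n^{2k}/(p_n^{2k} − 1)) · p_m^{2k}/(p_m^{2k} − c) for every natural number k ≥ 1, then c ≥ β'. -/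
open Finset

lemma bernoulli_two' : bernoulli 2 = 1/6 := by
  rw [bernoulli, bernoulli'_def]
  norm_num [Finset.sum_range_succ]

theorem bernoulli_upper_bound_beta'_best (m : ℕ) (hm : 2 ≤ m) (c : ℝ)
    (hc : c < (oddPrime (m - 1) : ℝ) ^ 2)
    (h : ∀ k : ℕ, 1 ≤ k →
      (Real.pi ^ (2 * k) * ((2 : ℝ) ^ (2 * k) - 1) / (2 * (Nat.factorial (2 * k) : ℝ))) *
          |(bernoulli (2 * k) : ℝ)|
      < (∏ n ∈ Finset.range (m - 1),
            ((oddPrime n : ℝ) ^ (2 * k) / ((oddPrime n : ℝ) ^ (2 * k) - 1))) *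
          ((oddPrime (m - 1) : ℝ) ^ (2 * k) / ((oddPrime (m - 1) : ℝ) ^ (2 * k) - c))) :
    (oddPrime (m - 1) : ℝ) ^ 2 *
        (1 - 8 / Real.pi ^ 2 *
          ∏ n ∈ Finset.range (m - 1),
            ((oddPrime n : ℝ) ^ 2 / ((oddPrime n : ℝ) ^ 2 - 1)))
      ≤ c := by
  have hπ : (0:ℝ) < Real.pi := Real.pi_pos
  have hπ2 : (0:ℝ) < Real.pi ^ 2 := by positivity
  set q : ℝ := (oddPrime (m - 1) : ℝ) with hq
  set P : ℝ := ∏ n ∈ Finset.range (m - 1),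
      ((oddPrime n : ℝ) ^ 2 / ((oddPrime n : ℝ) ^ 2 - 1)) with hP
  have hP0 : 0 < P := by
    apply Finset.prod_pos
    intro n _
    have h3 : (3:ℝ) ≤ (oddPrime n : ℝ) := by exact_mod_cast three_le_oddPrime n
    have h1 : (1:ℝ) < (oddPrime n : ℝ) ^ 2 := by nlinarith
    exact div_pos (by positivity) (by linarith)
  have hh := h 1 le_rfl
  have hb : |(bernoulli (2 * 1) : ℝ)| = 1/6 := by
    norm_num [bernoulli_two']
  rw [hb] at hh
  norm_num only [mul_one] at hh
  have hfac : ((Nat.factorial 2 : ℕ) : ℝ) = 2 := by norm_num [Nat.factorial]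
  -- hh : π^2 * (2^2 - 1) / (2*2) * (1/6) < P * (q^2 / (q^2 - c))
  have hd : (0:ℝ) < q ^ 2 - c := by linarith
  have hre : P * (q ^ 2 / (q ^ 2 - c)) = P * q ^ 2 / (q ^ 2 - c) := by ring
  rw [hre, lt_div_iff₀ hd] at hh
  have hgoal : q ^ 2 * (1 - 8 / Real.pi ^ 2 * P)
      = (Real.pi ^ 2 * q ^ 2 - 8 * P * q ^ 2) / Real.pi ^ 2 := by
    field_simp
  rw [hgoal, div_le_iff₀ hπ2]
  nlinarith [hh]
end
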